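/- Let p be a positive integer and α_1, …, α_p ∈ ℂ[[y]]. Let D be a positive integer such that for every θ ∈ ℂ with θ^D = 1 the rescaling substitution y ↦ θy (sending Σ_j a_j y^j to Σ_j a_j θ^j y^j) permutes the multiset [α_1, …, α_p]. Fix k ∈ {1,…,p} and a positive integer h, and let e be a positive divisor of D that divides every exponent appearing in the support of the truncation λ = Σ_{e'<h} coeff_{e'}(α_k) y^{e'}. Set n = e / gcd(e, h). If D divides q(B) = Σ_{i=1}^p min(h, O(α_k, α_i)), then there exists a polynomial G ∈ ℂ[z] such that F_B(z) = G(z^n) as polynomials, where F_B(z) = ∏_{i ∈ S}(z − coeff_h(α_i)) and S = {i : O(α_i, α_k) ≥ h}. -/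

import Mathlib

open Polynomial Finset

private lemma order_neg' (f : PowerSeries ℂ) : (-f).order = f.order := by
  apply le_antisymm
  · apply PowerSeries.le_order
    intro i hi
    have := PowerSeries.coeff_of_lt_order i hi
    rw [map_neg, neg_eq_zero] at this
    exact this
  · apply PowerSeries.le_order
    intro i hi
    rw [map_neg, PowerSeries.coeff_of_lt_order i hi, neg_zero]

private lemma minOrder_le {f g : PowerSeries ℂ} {h : ℕ}
    (H : ∀ m < h, PowerSeries.coeff m f = 0 → PowerSeries.coeff m g = 0) :
    min (h : ℕ∞) f.order ≤ min (h : ℕ∞) g.order := by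
  rcases le_or_gt (h : ℕ∞) g.order with hle | hlt
  · exact (min_eq_left hle).symm ▸ min_le_left _ _
  · have hlt' : g.order < ⊤ := lt_of_lt_of_le hlt le_top
    have hmo : ((g.order.lift hlt' : ℕ) : ℕ∞) = g.order := ENat.coe_lift _ _
    have hmh : (g.order.lift hlt') < h := by
      have : ((g.order.lift hlt' : ℕ) : ℕ∞) < (h : ℕ∞) := by rw [hmo]; exact hlt
      exact_mod_cast this
    have hgne : PowerSeries.coeff (g.order.lift hlt') g ≠ 0 := by
      rw [ENat.lift_eq_toNat_of_lt_top hlt']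
      exact PowerSeries.coeff_order (fun h0 => by simp [h0] at hlt')
    have hfne : PowerSeries.coeff (g.order.lift hlt') f ≠ 0 := fun h0 => hgne (H _ hmh h0)
    calc min (h:ℕ∞) f.order ≤ f.order := min_le_right _ _
      _ ≤ ((g.order.lift hlt' : ℕ) : ℕ∞) := PowerSeries.order_le _ hfne
      _ = g.order := hmo
      _ = min (h:ℕ∞) g.order := (min_eq_right hlt.le).symm

private lemma map_val_perm {ι : Type*} [DecidableEq ι] (s : Finset ι) (σ : Equiv.Perm ι)
    (hs : ∀ i, σ i ∈ s ↔ i ∈ s) (f : ι → ℂ) :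
    s.val.map (fun i => f (σ i)) = s.val.map f := by
  have h1 : s.map σ.toEmbedding = s := by
    ext j
    rw [Finset.mem_map_equiv, ← hs (σ.symm j), Equiv.apply_symm_apply]
  calc s.val.map (fun i => f (σ i)) = (s.val.map σ).map f := by
        rw [Multiset.map_map]; rfl
    _ = s.val.map f := by
        rw [show s.val.map ⇑σ = (s.map σ.toEmbedding).val from rfl, h1]

private lemma prod_map_mul_const (c : ℂ) (M : Multiset ℂ) :
    (M.map (fun x => c * x)).prod = c ^ Multiset.card M * M.prod := by
  induction M using Multiset.induction_on with
  | empty => simp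
  | cons a M ih => simp only [Multiset.map_cons, Multiset.prod_cons, Multiset.card_cons, ih]; ring

private lemma coeff_X_sub_C_mul (a : ℂ) (P : ℂ[X]) (m : ℕ) :
    ((X - C a) * P).coeff (m + 1) = P.coeff m - a * P.coeff (m + 1) := by
  rw [sub_mul, Polynomial.coeff_sub, Polynomial.coeff_X_mul, Polynomial.coeff_C_mul]

private lemma coeff_X_sub_C_mul_zero (a : ℂ) (P : ℂ[X]) :
    ((X - C a) * P).coeff 0 = -(a * P.coeff 0) := by
  rw [Polynomial.mul_coeff_zero]
  simp

private lemma coeff_prod_scale (u : ℂ) (R : Multiset ℂ) (m : ℕ) :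
    ((R.map (fun c => X - C (u * c))).prod).coeff m * u ^ m
      = u ^ Multiset.card R * ((R.map (fun c => (X : ℂ[X]) - C c)).prod).coeff m := by
  induction R using Multiset.induction_on generalizing m with
  | empty =>
      cases m <;> simp [Polynomial.coeff_one]
  | cons c R ih =>
      rw [Multiset.map_cons, Multiset.map_cons, Multiset.prod_cons, Multiset.prod_cons,
        Multiset.card_cons]
      cases m with
      | zero =>
          rw [coeff_X_sub_C_mul_zero, coeff_X_sub_C_mul_zero]
          linear_combination (-(u * c)) * ih 0
      | succ m =>
          rw [coeff_X_sub_C_mul, coeff_X_sub_C_mul]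
          linear_combination u * ih m - (u * c) * ih (m + 1)



/-- Theorem 4 of the paper (in cleared-denominator form): if the conjugation action
`y ↦ θy` (for `θ^D = 1`) permutes the roots `α_1, …, α_p`, the truncation
`λ_B` of `α_k` below `h` has support divisible by `e ∣ D`, `n = e / gcd(e, h)`, and
`D` divides `q(B)`, then `F_B(z) = ∏_{i : O(α_i,α_k) ≥ h} (z - coeff_h α_i)` is a
polynomial in `z^n`. -/
theorem stmt_0 (p : ℕ) (hp : 1 ≤ p) (α : Fin p → PowerSeries ℂ)
    (D : ℕ) (hD : 0 < D)
    (hperm : ∀ θ : ℂ, θ ^ D = 1 →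
      ∃ σ : Equiv.Perm (Fin p), ∀ i, PowerSeries.rescale θ (α i) = α (σ i))
    (k : Fin p) (h : ℕ) (hh : 0 < h)
    (e : ℕ) (he : 0 < e) (heD : e ∣ D)
    (hsupp : ∀ e' < h, PowerSeries.coeff e' (α k) ≠ 0 → e ∣ e')
    (n : ℕ) (hn : n = e / Nat.gcd e h)
    (hq : D ∣ ∑ i, (min (h : ℕ∞) ((α k - α i).order)).toNat) :
    ∃ G : Polynomial ℂ,
      (∏ i ∈ Finset.univ.filter fun i => (h : ℕ∞) ≤ (α i - α k).order,
          (Polynomial.X - Polynomial.C (PowerSeries.coeff h (α i))))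
        = G.comp (Polynomial.X ^ n) := by
    classical
  subst hn
  have hg0 : 0 < Nat.gcd e h := Nat.gcd_pos_of_pos_left h he
  have hn0 : 0 < e / Nat.gcd e h := Nat.div_pos (Nat.le_of_dvd he (Nat.gcd_dvd_left e h)) hg0
  -- a primitive e-th root of unity
  obtain ⟨θ, hθ'⟩ : ∃ θ : ℂ, IsPrimitiveRoot θ e := ⟨_, Complex.isPrimitiveRoot_exp e he.ne'⟩
  have hθ0 : θ ≠ 0 := hθ'.ne_zero he.ne'
  have hθe : θ ^ e = 1 := hθ'.pow_eq_one
  have hθD : θ ^ D = 1 := by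
    obtain ⟨c, hc⟩ := heD
    rw [hc, pow_mul, hθe, one_pow]
  obtain ⟨σ, hσ⟩ := hperm θ hθD
  have hco : ∀ (i : Fin p) (m : ℕ),
      PowerSeries.coeff m (α (σ i)) = θ ^ m * PowerSeries.coeff m (α i) := by
    intro i m
    rw [← hσ, PowerSeries.coeff_rescale]
  have hk0 : ∀ m < h, (1 - θ ^ m) * PowerSeries.coeff m (α k) = 0 := by
    intro m hm
    by_cases hc : PowerSeries.coeff m (α k) = 0
    · rw [hc, mul_zero]
    · obtain ⟨c, rfl⟩ := hsupp m hm hc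
      rw [pow_mul, hθe, one_pow, sub_self, zero_mul]
  have hkey : ∀ (i : Fin p), ∀ m < h,
      PowerSeries.coeff m (α k - α (σ i)) = θ ^ m * PowerSeries.coeff m (α k - α i) := by
    intro i m hm
    rw [map_sub, map_sub, hco]
    linear_combination hk0 m hm
  have hθm : ∀ m : ℕ, θ ^ m ≠ 0 := fun m => pow_ne_zero m hθ0
  have hmin : ∀ i : Fin p,
      min (h : ℕ∞) ((α k - α (σ i)).order) = min (h : ℕ∞) ((α k - α i).order) := by
    intro i
    apply le_antisymm
    · apply minOrder_le
      intro m hm h0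
      have hk := hkey i m hm
      rw [h0] at hk
      exact ((mul_eq_zero.mp hk.symm).resolve_left (hθm m))
    · apply minOrder_le
      intro m hm h0
      rw [hkey i m hm, h0, mul_zero]
  set S := Finset.univ.filter (fun i => (h : ℕ∞) ≤ (α i - α k).order) with hS
  have hmem : ∀ i, i ∈ S ↔ (h : ℕ∞) ≤ ((α k - α i).order) := by
    intro i
    rw [hS, Finset.mem_filter,
      show α k - α i = -(α i - α k) from (neg_sub _ _).symm, order_neg']
    simp
  have hσS : ∀ i, σ i ∈ S ↔ i ∈ S := by
    intro i
    rw [hmem, hmem, ← min_eq_left_iff, ← min_eq_left_iff, hmin i]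
  set N : Fin p → ℕ := fun i => (min (h : ℕ∞) ((α k - α i).order)).toNat with hN
  have hq' : D ∣ ∑ i, N i := hq
  have hNσ : ∀ i, N (σ i) = N i := fun i => congrArg ENat.toNat (hmin i)
  have hNS : ∀ i ∈ S, N i = h := by
    intro i hi
    show (min (h : ℕ∞) ((α k - α i).order)).toNat = h
    rw [min_eq_left ((hmem i).mp hi)]
    simp
  have hNnotS : ∀ i, i ∉ S →
      N i < h ∧ ((α k - α i).order = (N i : ℕ∞)) ∧
        PowerSeries.coeff (N i) (α k - α i) ≠ 0 := by
    intro i hi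
    have hlt : (α k - α i).order < (h : ℕ∞) := by
      rw [hmem] at hi
      exact lt_of_not_ge hi
    have htop : (α k - α i).order ≠ ⊤ := ne_top_of_lt hlt
    have hcoe : (((α k - α i).order.toNat : ℕ) : ℕ∞) = (α k - α i).order := ENat.coe_toNat htop
    have hNi : N i = (α k - α i).order.toNat := by
      show (min (h : ℕ∞) ((α k - α i).order)).toNat = _
      rw [min_eq_right hlt.le]
    have hlt2 : N i < h := by
      rw [hNi]
      have : (((α k - α i).order.toNat : ℕ) : ℕ∞) < (h : ℕ∞) := by rw [hcoe]; exact hlt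
      exact_mod_cast this
    have hord : (α k - α i).order = ((N i : ℕ) : ℕ∞) := by rw [hNi, hcoe]
    refine ⟨hlt2, hord, ?_⟩
    exact (PowerSeries.order_eq_nat.mp hord).1
  -- sum splitting
  have hsplit : ∑ i ∈ S, N i + ∑ i ∈ Sᶜ, N i = ∑ i, N i := Finset.sum_add_sum_compl S N
  have hsum1 : ∑ i ∈ S, N i = S.card * h := by
    rw [Finset.sum_congr rfl hNS, Finset.sum_const, smul_eq_mul]
  have hmaps : ∀ i ∈ Sᶜ, N i ∈ Finset.range h := by
    intro i hi
    exact Finset.mem_range.mpr (hNnotS i (Finset.mem_compl.mp hi)).1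
  have hfiber : ∑ m ∈ Finset.range h, ∑ i ∈ Sᶜ.filter (fun i => N i = m), N i
      = ∑ i ∈ Sᶜ, N i := Finset.sum_fiberwise_of_maps_to hmaps N
  have hdvd_fiber : ∀ m ∈ Finset.range h, e ∣ ∑ i ∈ Sᶜ.filter (fun i => N i = m), N i := by
    intro m hm
    have hmh : m < h := Finset.mem_range.mp hm
    set T := Sᶜ.filter (fun i => N i = m) with hT
    have hTsum : ∑ i ∈ T, N i = T.card * m := by
      rw [Finset.sum_congr rfl (fun i hi => (Finset.mem_filter.mp hi).2), Finset.sum_const,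
        smul_eq_mul]
    rw [hTsum]
    by_cases hem : e ∣ m
    · exact Dvd.dvd.mul_left hem _
    · have hak : PowerSeries.coeff m (α k) = 0 := by
        by_contra hc
        exact hem (hsupp m hmh hc)
      have hTmem : ∀ i, i ∈ T ↔ (i ∉ S ∧ N i = m) := by
        intro i
        rw [hT, Finset.mem_filter, Finset.mem_compl]
      have hσT : ∀ i, σ i ∈ T ↔ i ∈ T := by
        intro i
        rw [hTmem, hTmem, hσS, hNσ]
      have hTne : ∀ i ∈ T, PowerSeries.coeff m (α i) ≠ 0 := by
        intro i hi hzero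
        obtain ⟨hiS, hiN⟩ := (hTmem i).mp hi
        have h3 := (hNnotS i hiS).2.2
        rw [hiN] at h3
        apply h3
        rw [map_sub, hak, hzero, sub_zero]
      have hMinv : (T.val.map (fun i => PowerSeries.coeff m (α i))).map (fun x => θ ^ m * x)
          = T.val.map (fun i => PowerSeries.coeff m (α i)) := by
        rw [Multiset.map_map]
        rw [← map_val_perm T σ hσT (fun i => PowerSeries.coeff m (α i))]
        congr 1
        funext i
        simp only [Function.comp_apply]
        exact (hco i m).symm
      have hprod : (θ ^ m) ^ T.card * (T.val.map (fun i => PowerSeries.coeff m (α i))).prod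
          = (T.val.map (fun i => PowerSeries.coeff m (α i))).prod := by
        conv_rhs => rw [← hMinv]
        rw [prod_map_mul_const, Multiset.card_map]
        rfl
      have hprodne : (T.val.map (fun i => PowerSeries.coeff m (α i))).prod ≠ 0 := by
        apply Multiset.prod_ne_zero
        intro h0
        obtain ⟨i, hi, hi0⟩ := Multiset.mem_map.mp h0
        exact hTne i hi hi0
      have hpow1 : (θ ^ m) ^ T.card = 1 :=
        mul_right_cancel₀ hprodne (by rw [hprod, one_mul])
      rw [← pow_mul, hθ'.pow_eq_one_iff_dvd] at hpow1
      rwa [mul_comm]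
  have hScdvd : e ∣ ∑ i ∈ Sᶜ, N i := by
    rw [← hfiber]
    exact Finset.dvd_sum hdvd_fiber
  have hhS : e ∣ S.card * h := by
    have h1 : e ∣ ∑ i ∈ S, N i + ∑ i ∈ Sᶜ, N i := by
      rw [hsplit]
      exact dvd_trans heD hq'
    rw [hsum1, add_comm] at h1
    exact (Nat.dvd_add_right hScdvd).mp h1
  have himp : ∀ m : ℕ, e ∣ h * m → (e / Nat.gcd e h) ∣ m := by
    intro m hm
    have hcop : Nat.Coprime (e / Nat.gcd e h) (h / Nat.gcd e h) :=
      Nat.coprime_div_gcd_div_gcd hg0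
    apply Nat.Coprime.dvd_of_dvd_mul_left hcop
    have h2 : Nat.gcd e h * (e / Nat.gcd e h) ∣ Nat.gcd e h * (h / Nat.gcd e h * m) := by
      rw [Nat.mul_div_cancel' (Nat.gcd_dvd_left e h), ← mul_assoc,
        Nat.mul_div_cancel' (Nat.gcd_dvd_right e h)]
      exact hm
    exact (Nat.mul_dvd_mul_iff_left hg0).mp h2
  -- the polynomial
  set F := ∏ i ∈ S, (Polynomial.X - Polynomial.C (PowerSeries.coeff h (α i))) with hF
  set R := S.val.map (fun i => PowerSeries.coeff h (α i)) with hR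
  have hFR : F = (R.map (fun c => (Polynomial.X : Polynomial ℂ) - Polynomial.C c)).prod := by
    rw [hF, Finset.prod_eq_multiset_prod, hR, Multiset.map_map]
    rfl
  have hRinv : R.map (fun x => θ ^ h * x) = R := by
    rw [hR, Multiset.map_map]
    rw [← map_val_perm S σ hσS (fun i => PowerSeries.coeff h (α i))]
    congr 1
    funext i
    simp only [Function.comp_apply]
    exact (hco i h).symm
  have hcardR : Multiset.card R = S.card := by rw [hR, Multiset.card_map]; rfl
  have hpowS : (θ ^ h) ^ S.card = 1 := by
    rw [← pow_mul, hθ'.pow_eq_one_iff_dvd, mul_comm]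
    exact hhS
  have hFcoeff : ∀ m, ¬ (e / Nat.gcd e h) ∣ m → F.coeff m = 0 := by
    intro m hm
    have hmaps2 : R.map (fun c => (Polynomial.X : Polynomial ℂ) - Polynomial.C (θ ^ h * c))
        = R.map (fun c => (Polynomial.X : Polynomial ℂ) - Polynomial.C c) := by
      rw [show (fun c => (Polynomial.X : Polynomial ℂ) - Polynomial.C (θ ^ h * c))
          = (fun c => (Polynomial.X : Polynomial ℂ) - Polynomial.C c) ∘ (fun x => θ ^ h * x)
          from rfl, ← Multiset.map_map, hRinv]
    have h1 := coeff_prod_scale (θ ^ h) R m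
    rw [hmaps2, ← hFR, hcardR, hpowS, one_mul] at h1
    have hx : (θ ^ h) ^ m ≠ 1 := by
      intro hone
      apply hm
      apply himp
      rwa [← pow_mul, hθ'.pow_eq_one_iff_dvd] at hone
    have h2 : F.coeff m * ((θ ^ h) ^ m - 1) = 0 := by linear_combination h1
    rcases mul_eq_zero.mp h2 with h3 | h3
    · exact h3
    · exact absurd (sub_eq_zero.mp h3) hx
  refine ⟨F.contract (e / Nat.gcd e h), ?_⟩
  rw [← Polynomial.expand_eq_comp_X_pow]
  ext m
  rw [Polynomial.coeff_expand hn0]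
  split_ifs with hdvd
  · rw [Polynomial.coeff_contract hn0.ne', Nat.div_mul_cancel hdvd]
  · exact hFcoeff m hdvd
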